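/- For every n ≥ 1 and every profile x ∈ [0,1]^n there exists a facility location y ∈ [0,1] satisfying 2-IFS such that sup_{z ∈ [0,1]} ∑_i |z − x_i| ≤ 2 · ∑_i |y − x_i|. Hence the price of 2-IFS for utilitarian welfare is at most 2 (and, with the matching lower bound, equals 2). -/

import Mathlib

open Finset

private lemma gauss_real (m : ℕ) : (∑ j ∈ Finset.range m, (j:ℝ)) = m * (m - 1) / 2 := by
  induction m with
  | zero => simp
  | succ k ih =>
    rw [Finset.sum_range_succ, ih]
    push_cast
    ring

/-- Key lemma: if the mean is at least 1/2, there is a 2-IFS point whose welfare is at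
least half the total sum `∑ x i`. -/
private lemma keyA (n : ℕ) (x : Fin n → ℝ) (hn : 1 ≤ n) (hx : ∀ i, x i ∈ Set.Icc (0:ℝ) 1)
    (hS : (n:ℝ) ≤ 2 * ∑ i, x i) :
    ∃ y ∈ Set.Icc (0:ℝ) 1, (∀ i, 1 / (2 * (n:ℝ)) ≤ |y - x i|) ∧
      ∑ i, x i ≤ 2 * ∑ i, |y - x i| := by
  classical
  have hn0 : (0:ℝ) < n := by exact_mod_cast hn
  -- an agent cannot block two distinct grid points
  have sep : ∀ (j j' : ℕ) (i : Fin n), j ≠ j' →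
      |(j:ℝ)/n - x i| < 1/(2*(n:ℝ)) → |(j':ℝ)/n - x i| < 1/(2*(n:ℝ)) → False := by
    intro j j' i hne h1 h2
    have h2' : (1:ℝ) ≤ |(j:ℝ) - (j':ℝ)| := by
      have h1' : (1:ℤ) ≤ |(j:ℤ) - (j':ℤ)| :=
        Int.one_le_abs (sub_ne_zero.mpr (by exact_mod_cast hne))
      exact_mod_cast h1'
    have hge : (1:ℝ)/n ≤ |(j:ℝ)/n - (j':ℝ)/n| := by
      have heq : |(j:ℝ)/n - (j':ℝ)/n| = |(j:ℝ) - (j':ℝ)| / n := by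
        rw [div_sub_div_same, abs_div, abs_of_pos hn0]
      rw [heq]
      gcongr
    have htri : |(j:ℝ)/n - (j':ℝ)/n| ≤ |(j:ℝ)/n - x i| + |(j':ℝ)/n - x i| := by
      have := abs_sub_le ((j:ℝ)/n) (x i) ((j':ℝ)/n)
      rwa [abs_sub_comm (x i) ((j':ℝ)/n)] at this
    have hlt : |(j:ℝ)/n - (j':ℝ)/n| < 1/n := by
      have : (1:ℝ)/(2*(n:ℝ)) + 1/(2*(n:ℝ)) = 1/n := by ring
      linarith
    linarith
  -- a feasible grid point exists
  have hex : ∃ j, j ≤ n ∧ ∀ i, 1/(2*(n:ℝ)) ≤ |(j:ℝ)/n - x i| := by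
    by_contra hcon
    push_neg at hcon
    have hch : ∀ j, ∃ i : Fin n, (j ≤ n → |(j:ℝ)/n - x i| < 1/(2*(n:ℝ))) := by
      intro j
      by_cases h : j ≤ n
      · obtain ⟨i, hi⟩ := hcon j h
        exact ⟨i, fun _ => hi⟩
      · exact ⟨⟨0, hn⟩, fun hj => absurd hj h⟩
    choose F hF using hch
    obtain ⟨a, ha, b, hb, hab, heq⟩ :=
      Finset.exists_ne_map_eq_of_card_lt_of_maps_to
        (s := Finset.range (n+1)) (t := (Finset.univ : Finset (Fin n)))
        (by simp) (fun j _ => Finset.mem_univ (F j))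
    have ha' : a ≤ n := Nat.lt_succ_iff.mp (Finset.mem_range.mp ha)
    have hb' : b ≤ n := Nat.lt_succ_iff.mp (Finset.mem_range.mp hb)
    exact sep a b (F a) hab (hF a ha') (heq ▸ hF b hb')
  -- the least feasible grid point
  have hjsn : Nat.find hex ≤ n := (Nat.find_spec hex).1
  have hjsfeas := (Nat.find_spec hex).2
  set js := Nat.find hex with hjs
  -- every smaller grid point is blocked
  have hblocked : ∀ j, j < js → ∃ i : Fin n, |(j:ℝ)/n - x i| < 1/(2*(n:ℝ)) := by
    intro j hj
    have hmin := Nat.find_min hex hj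
    push_neg at hmin
    obtain ⟨i, hi⟩ := hmin (le_trans hj.le hjsn)
    exact ⟨i, hi⟩
  -- the blocking agents
  let g : ℕ → Fin n := fun j => if h : j < js then Classical.choose (hblocked j h) else ⟨0, hn⟩
  have hg : ∀ j, j < js → |(j:ℝ)/n - x (g j)| < 1/(2*(n:ℝ)) := by
    intro j h
    simp only [g, dif_pos h]
    exact Classical.choose_spec (hblocked j h)
  set y : ℝ := (js : ℝ)/n with hy
  have hy0 : 0 ≤ y := by positivity
  have hy1 : y ≤ 1 := by
    rw [hy, div_le_one hn0]; exact_mod_cast hjsn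
  -- blocking agents lie strictly left of y, at distance `x (g j) ≤ j/n + 1/(2n)`
  have hgx : ∀ j, j < js → x (g j) ≤ (j:ℝ)/n + 1/(2*(n:ℝ)) := by
    intro j h
    have := abs_lt.mp (hg j h)
    linarith [this.1]
  have hgy : ∀ j, j < js → x (g j) ≤ y := by
    intro j h
    have h1 := hgx j h
    have h2 : (j:ℝ) + 1 ≤ (js:ℝ) := by exact_mod_cast h
    have : (j:ℝ)/n + 1/(2*(n:ℝ)) ≤ y := by
      rw [hy]
      rw [div_add_div _ _ (ne_of_gt hn0) (by positivity), div_le_div_iff₀ (by positivity) hn0]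
      ring_nf
      nlinarith
    linarith
  -- injectivity of g on range js
  have hginj : ∀ a ∈ Finset.range js, ∀ b ∈ Finset.range js, g a = g b → a = b := by
    intro a ha b hb hab
    by_contra hne
    exact sep a b (g a) hne (hg a (Finset.mem_range.mp ha))
      (hab ▸ hg b (Finset.mem_range.mp hb))
  set T : Finset (Fin n) := (Finset.range js).image g with hT
  have hsplit : ∑ i, |y - x i| = ∑ i ∈ T, |y - x i| + ∑ i ∈ Tᶜ, |y - x i| :=
    (Finset.sum_add_sum_compl T _).symm
  have hTval : ∀ i ∈ T, y - x i = |y - x i| := by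
    intro i hi
    obtain ⟨j, hj, rfl⟩ := Finset.mem_image.mp hi
    rw [abs_of_nonneg (sub_nonneg.mpr (hgy j (Finset.mem_range.mp hj)))]
  have hTc : ∀ i ∈ Tᶜ, x i - y ≤ |y - x i| := by
    intro i _
    rw [abs_sub_comm]
    exact le_abs_self _
  -- lower bound the welfare
  have hTsum : (js:ℝ)^2/(2*n) ≤ ∑ i ∈ T, (y - x i) := by
    rw [hT, Finset.sum_image hginj]
    have hstep : ∑ j ∈ Finset.range js, (y - ((j:ℝ)/n + 1/(2*(n:ℝ)))) ≤
        ∑ j ∈ Finset.range js, (y - x (g j)) := by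
      apply Finset.sum_le_sum
      intro j hj
      have := hgx j (Finset.mem_range.mp hj)
      linarith
    have hval : ∑ j ∈ Finset.range js, (y - ((j:ℝ)/n + 1/(2*(n:ℝ)))) = (js:ℝ)^2/(2*n) := by
      rw [Finset.sum_sub_distrib, Finset.sum_const, Finset.card_range]
      rw [Finset.sum_add_distrib, Finset.sum_const, Finset.card_range]
      rw [← Finset.sum_div, gauss_real, hy]
      field_simp
      linear_combination (2*(js:ℝ)^2 - js) * (mul_inv_cancel₀ (ne_of_gt hn0))
    linarith
  have hW : ∑ i, x i - (n:ℝ)*y + 2*((js:ℝ)^2/(2*n)) ≤ ∑ i, |y - x i| := by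
    have h1 : ∑ i ∈ T, (y - x i) ≤ ∑ i ∈ T, |y - x i| :=
      Finset.sum_le_sum (fun i hi => (hTval i hi).le)
    have h2 : ∑ i ∈ Tᶜ, (x i - y) ≤ ∑ i ∈ Tᶜ, |y - x i| :=
      Finset.sum_le_sum hTc
    have h3 : ∑ i ∈ T, (x i - y) + ∑ i ∈ Tᶜ, (x i - y) = ∑ i, x i - (n:ℝ)*y := by
      rw [Finset.sum_add_sum_compl, Finset.sum_sub_distrib, Finset.sum_const,
        Finset.card_univ, Fintype.card_fin, nsmul_eq_mul]
    have h4 : ∑ i ∈ T, (x i - y) = - ∑ i ∈ T, (y - x i) := by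
      rw [← Finset.sum_neg_distrib]
      apply Finset.sum_congr rfl
      intro i _
      ring
    -- ∑ x i - n y = - ∑_T (y - x i) + ∑_{Tᶜ}(x i - y)
    -- hence ∑ x i - n y + 2 ∑_T (y-x) = ∑_T (y-x) + ∑_{Tᶜ}(x-y) ≤ f(y)
    have h5 : ∑ i, x i - (n:ℝ)*y + 2 * ∑ i ∈ T, (y - x i) =
        ∑ i ∈ T, (y - x i) + ∑ i ∈ Tᶜ, (x i - y) := by
      rw [← h3, h4]; ring
    have h6 : ∑ i, x i - (n:ℝ)*y + 2 * ∑ i ∈ T, (y - x i) ≤ ∑ i, |y - x i| := by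
      rw [h5, hsplit]
      exact add_le_add h1 h2
    linarith
  refine ⟨y, ⟨hy0, hy1⟩, hjsfeas, ?_⟩
  have hny : (n:ℝ)*y = (js:ℝ) := by
    rw [hy]; field_simp
  -- final arithmetic: ∑ x i ≤ 2*(∑ x i - js + js²/n), using n ≤ 2 ∑ x i and (n-2js)² ≥ 0
  have hfin : ∑ i, x i ≤ 2*(∑ i, x i - (n:ℝ)*y + 2*((js:ℝ)^2/(2*n))) := by
    rw [hny]
    have hsq : (0:ℝ) ≤ ((n:ℝ) - 2*(js:ℝ))^2 := sq_nonneg _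
    have : (js:ℝ)^2/(2*n)*(2*n) = (js:ℝ)^2 := by field_simp
    nlinarith [hS, hn0]
  linarith

private lemma welfare_le (n : ℕ) (x : Fin n → ℝ) (hx : ∀ i, x i ∈ Set.Icc (0:ℝ) 1)
    {z : ℝ} (hz : z ∈ Set.Icc (0:ℝ) 1) :
    ∑ i, |z - x i| ≤ max (∑ i, x i) ((n:ℝ) - ∑ i, x i) := by
  obtain ⟨hz0, hz1⟩ := hz
  have hterm : ∀ i, |z - x i| ≤ (1 - z) * x i + z * (1 - x i) := by
    intro i
    obtain ⟨h0, h1⟩ := hx i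
    rw [abs_sub_le_iff]
    constructor <;> nlinarith
  calc ∑ i, |z - x i| ≤ ∑ i, ((1 - z) * x i + z * (1 - x i)) :=
        Finset.sum_le_sum (fun i _ => hterm i)
    _ = (1 - z) * (∑ i, x i) + z * ((n:ℝ) - ∑ i, x i) := by
        rw [Finset.sum_add_distrib, ← Finset.mul_sum, ← Finset.mul_sum]
        congr 1
        rw [Finset.sum_sub_distrib, Finset.sum_const, Finset.card_univ, Fintype.card_fin,
          nsmul_eq_mul, mul_one]
    _ ≤ (1 - z) * max (∑ i, x i) ((n:ℝ) - ∑ i, x i)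
          + z * max (∑ i, x i) ((n:ℝ) - ∑ i, x i) := by
        gcongr
        · exact le_max_left _ _
        · exact le_max_right _ _
    _ = max (∑ i, x i) ((n:ℝ) - ∑ i, x i) := by ring

/-- The price of 2-IFS for utilitarian welfare is at most 2. -/
theorem price_of_two_IFS_UW_upper :
    ∀ (n : ℕ) (x : Fin n → ℝ), 1 ≤ n → (∀ i, x i ∈ Set.Icc (0:ℝ) 1) →
      ∃ y ∈ Set.Icc (0:ℝ) 1, (∀ i, 1 / (2 * n) ≤ |y - x i|) ∧
        sSup ((fun z => ∑ i, |z - x i|) '' Set.Icc (0:ℝ) 1) ≤ 2 * ∑ i, |y - x i| := by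
  intro n x hn hx
  have hne : ((fun z => ∑ i, |z - x i|) '' Set.Icc (0:ℝ) 1).Nonempty :=
    ⟨_, Set.mem_image_of_mem _ (by norm_num : (0:ℝ) ∈ Set.Icc (0:ℝ) 1)⟩
  have hsup : ∀ (b : ℝ), max (∑ i, x i) ((n:ℝ) - ∑ i, x i) ≤ b →
      sSup ((fun z => ∑ i, |z - x i|) '' Set.Icc (0:ℝ) 1) ≤ b := by
    intro b hb
    apply csSup_le hne
    rintro w ⟨z, hz, rfl⟩
    exact le_trans (welfare_le n x hx hz) hb
  rcases le_or_gt (n:ℝ) (2 * ∑ i, x i) with hc | hc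
  · obtain ⟨y, hymem, hyfeas, hyW⟩ := keyA n x hn hx hc
    refine ⟨y, hymem, hyfeas, ?_⟩
    apply hsup
    apply max_le
    · exact hyW
    · linarith
  · -- reflect the instance
    set x' : Fin n → ℝ := fun i => 1 - x i with hx'def
    have hx' : ∀ i, x' i ∈ Set.Icc (0:ℝ) 1 := by
      intro i
      obtain ⟨h0, h1⟩ := hx i
      exact ⟨by simp [x']; linarith, by simp [x']; linarith⟩
    have hSx' : ∑ i, x' i = (n:ℝ) - ∑ i, x i := by
      simp only [x']
      rw [Finset.sum_sub_distrib, Finset.sum_const, Finset.card_univ, Fintype.card_fin,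
        nsmul_eq_mul, mul_one]
    have hc' : (n:ℝ) ≤ 2 * ∑ i, x' i := by rw [hSx']; linarith
    obtain ⟨y', hy'mem, hy'feas, hy'W⟩ := keyA n x' hn hx' hc'
    refine ⟨1 - y', ⟨by linarith [hy'mem.2], by linarith [hy'mem.1]⟩, ?_, ?_⟩
    · intro i
      have := hy'feas i
      have heq : |1 - y' - x i| = |y' - x' i| := by
        rw [show (1:ℝ) - y' - x i = -(y' - x' i) by simp [x']; ring, abs_neg]
      rw [heq]
      exact this
    · have hsum : ∑ i, |1 - y' - x i| = ∑ i, |y' - x' i| := by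
        apply Finset.sum_congr rfl
        intro i _
        rw [show (1:ℝ) - y' - x i = -(y' - x' i) by simp [x']; ring, abs_neg]
      rw [hsum]
      apply hsup
      apply max_le
      · rw [← hSx'] at *; linarith
      · rw [← hSx']; exact hy'W
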